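/- Strong typings of pattern substitutions are preserved by context splitting: if Γ ⊢ s : Γ' is a strong typing of a pattern substitution and Γ' = Γ'₁ ⋈ Γ'₂ is a context split, then s admits typings Γ₁ ⊢ s : Γ'₁ and Γ₂ ⊢ s : Γ'₂ with Γ = Γ₁ ⋈ Γ₂, and both of these typings are strong. -/

import Mathlib

namespace LinUnif

/-- Linearity flags on variables/terms. -/
inductive Flag | I | A | L
deriving DecidableEq

/-- Context linearity flags: intuitionistic, affine, used affine, linear, used linear. -/
inductive CFlag | i | a | ua | l | ul
deriving DecidableEq

/-- Types of the linear/affine λ-calculus. -/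
inductive Ty
  | base (n : ℕ)
  | withT (A B : Ty)
  | lolli (A B : Ty)
  | affarr (A B : Ty)
  | arr (A B : Ty)
deriving DecidableEq

/-- Contexts: lists of types tagged with context linearity flags (head = de Bruijn index 1). -/
abbrev Ctx := List (Ty × CFlag)

def flagC : Flag → CFlag | .I => .i | .A => .a | .L => .l
def cToF : CFlag → Flag | .i => .I | .a => .A | .ua => .A | .l => .L | .ul => .L

/-- No linear (L) assumptions occur. -/
def NoLin (Γ : Ctx) : Prop := ∀ e ∈ Γ, e.2 ≠ CFlag.l

/-- The intuitionistic part of a context: L ↦ UL, A ↦ UA. -/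
def bar (Γ : Ctx) : Ctx :=
  Γ.map fun e => (e.1, match e.2 with | .l => CFlag.ul | .a => CFlag.ua | c => c)

/-- Context splitting Γ = Γ₁ ⋈ Γ₂. -/
inductive Split : Ctx → Ctx → Ctx → Prop
  | nil : Split [] [] []
  | int {Γ Γ₁ Γ₂ A} : Split Γ Γ₁ Γ₂ → Split ((A,.i)::Γ) ((A,.i)::Γ₁) ((A,.i)::Γ₂)
  | ulin {Γ Γ₁ Γ₂ A} : Split Γ Γ₁ Γ₂ → Split ((A,.ul)::Γ) ((A,.ul)::Γ₁) ((A,.ul)::Γ₂)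
  | uaff {Γ Γ₁ Γ₂ A} : Split Γ Γ₁ Γ₂ → Split ((A,.ua)::Γ) ((A,.ua)::Γ₁) ((A,.ua)::Γ₂)
  | linl {Γ Γ₁ Γ₂ A} : Split Γ Γ₁ Γ₂ → Split ((A,.l)::Γ) ((A,.l)::Γ₁) ((A,.ul)::Γ₂)
  | linr {Γ Γ₁ Γ₂ A} : Split Γ Γ₁ Γ₂ → Split ((A,.l)::Γ) ((A,.ul)::Γ₁) ((A,.l)::Γ₂)
  | affl {Γ Γ₁ Γ₂ A} : Split Γ Γ₁ Γ₂ → Split ((A,.a)::Γ) ((A,.a)::Γ₁) ((A,.ua)::Γ₂)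
  | affr {Γ Γ₁ Γ₂ A} : Split Γ Γ₁ Γ₂ → Split ((A,.a)::Γ) ((A,.ua)::Γ₁) ((A,.a)::Γ₂)

/-- Affine weakening Γ ≻_aff Γ'. -/
def AffWeak (Γ Γ' : Ctx) : Prop := ∃ Γ'', Split Γ Γ'' Γ' ∧ NoLin Γ''

/-- Typing of variables (1-based de Bruijn indices): Γ ⊢ n^f ⇒ A. -/
inductive VarTy : Ctx → ℕ → Flag → Ty → Prop
  | here {Γ A f} : NoLin Γ → VarTy ((A, flagC f)::Γ) 1 f A
  | there {Γ B l n f A} : VarTy Γ n f A → l ≠ CFlag.l → VarTy ((B,l)::Γ) (n+1) f A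

/-- Relaxed typing of variables Γ ⊢ᵢ n^f ⇒ A : all variables available,
    disregarding linearity/affineness (usedness). -/
inductive VarTyR : Ctx → ℕ → Flag → Ty → Prop
  | here {Γ A l f} : cToF l = f → VarTyR ((A,l)::Γ) 1 f A
  | there {Γ B l n f A} : VarTyR Γ n f A → VarTyR ((B,l)::Γ) (n+1) f A

/-- Substitution entries: a de Bruijn index together with its variable flag f'
    and the extension flag f (the entry `n^{f'f}`). A full substitution is a
    list of entries followed by a shift `↑ⁿ`. -/
abbrev SubE := List (ℕ × Flag × Flag)

def shiftE (es : SubE) : SubE := es.map fun e => (e.1+1, e.2)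

/-- Typing of substitutions (whose entries are variables): Γ ⊢ es.↑ⁿ : Γ'. -/
inductive SubTy : Ctx → SubE → ℕ → Ctx → Prop
  | nil : SubTy [] [] 0 []
  | shift {Γ B l n Γ'} : SubTy Γ [] n Γ' → l ≠ CFlag.l → SubTy ((B,l)::Γ) [] (n+1) Γ'
  | consI {Γ m f' A es n Γ'} : VarTy (bar Γ) m f' A → SubTy Γ es n Γ' →
      SubTy Γ ((m,f',Flag.I)::es) n ((A,CFlag.i)::Γ')
  | consL {Γ Γ₁ Γ₂ m f' A es n Γ'} : Split Γ Γ₁ Γ₂ → VarTy Γ₁ m f' A → SubTy Γ₂ es n Γ' →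
      SubTy Γ ((m,f',Flag.L)::es) n ((A,CFlag.l)::Γ')
  | consA {Γ Γ₁ Γ₂ m f' A es n Γ'} : Split Γ Γ₁ Γ₂ → NoLin Γ₁ → VarTy Γ₁ m f' A →
      SubTy Γ₂ es n Γ' → SubTy Γ ((m,f',Flag.A)::es) n ((A,CFlag.a)::Γ')
  | consUL {Γ m f' A es n Γ'} : VarTyR Γ m f' A → SubTy Γ es n Γ' →
      SubTy Γ ((m,f',Flag.L)::es) n ((A,CFlag.ul)::Γ')
  | consUA {Γ m f' A es n Γ'} : VarTyR Γ m f' A → f' ≠ Flag.L → SubTy Γ es n Γ' →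
      SubTy Γ ((m,f',Flag.A)::es) n ((A,CFlag.ua)::Γ')

/-- Pattern substitution: distinct de Bruijn indices, no linear-changing extension. -/
def PatternSub (es : SubE) : Prop :=
  es.Pairwise (fun a b => a.1 ≠ b.1) ∧ ∀ e ∈ es, e.2.1 = e.2.2 ∧ 1 ≤ e.1

/-- Terms (canonical forms), with logic variables `lvar X es sh` under a
    substitution consisting of variable entries `es` and a trailing shift `sh`. -/
inductive Tm
  | var (n : ℕ) (f : Flag)
  | lvar (X : ℕ) (es : SubE) (sh : ℕ)
  | pair (M N : Tm)
  | fst (M : Tm)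
  | snd (M : Tm)
  | lamL (M : Tm)
  | lamA (M : Tm)
  | lamI (M : Tm)
  | appL (M N : Tm)
  | appA (M N : Tm)
  | appI (M N : Tm)
deriving DecidableEq

/-- Bidirectional typing of canonical terms, with assignments ΓX, AX of contexts
    and types to logic variables. -/
inductive HasTy (ΓX : ℕ → Ctx) (AX : ℕ → Ty) : Ctx → Tm → Ty → Prop
  | var {Γ n f A} : VarTy Γ n f A → HasTy ΓX AX Γ (.var n f) A
  | lvar {Γ es sh X} : SubTy Γ es sh (ΓX X) → HasTy ΓX AX Γ (.lvar X es sh) (AX X)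
  | pair {Γ M N A B} : HasTy ΓX AX Γ M A → HasTy ΓX AX Γ N B →
      HasTy ΓX AX Γ (.pair M N) (.withT A B)
  | fst {Γ M A B} : HasTy ΓX AX Γ M (.withT A B) → HasTy ΓX AX Γ (.fst M) A
  | snd {Γ M A B} : HasTy ΓX AX Γ M (.withT A B) → HasTy ΓX AX Γ (.snd M) B
  | lamL {Γ M A B} : HasTy ΓX AX ((A,CFlag.l)::Γ) M B → HasTy ΓX AX Γ (.lamL M) (.lolli A B)
  | lamA {Γ M A B} : HasTy ΓX AX ((A,CFlag.a)::Γ) M B → HasTy ΓX AX Γ (.lamA M) (.affarr A B)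
  | lamI {Γ M A B} : HasTy ΓX AX ((A,CFlag.i)::Γ) M B → HasTy ΓX AX Γ (.lamI M) (.arr A B)
  | appL {Γ Γ₁ Γ₂ M N A B} : Split Γ Γ₁ Γ₂ → HasTy ΓX AX Γ₁ M (.lolli A B) →
      HasTy ΓX AX Γ₂ N A → HasTy ΓX AX Γ (.appL M N) B
  | appA {Γ Γ₁ Γ₂ M N A B} : Split Γ Γ₁ Γ₂ → NoLin Γ₂ → HasTy ΓX AX Γ₁ M (.affarr A B) →
      HasTy ΓX AX Γ₂ N A → HasTy ΓX AX Γ (.appA M N) B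
  | appI {Γ M N A B} : HasTy ΓX AX Γ M (.arr A B) → HasTy ΓX AX (bar Γ) N A →
      HasTy ΓX AX Γ (.appI M N) B

/-- All logic-variable substitutions occurring in a term are pattern substitutions. -/
def PatternTm : Tm → Prop
  | .var _ _ => True
  | .lvar _ es _ => PatternSub es
  | .pair M N => PatternTm M ∧ PatternTm N
  | .fst M => PatternTm M
  | .snd M => PatternTm M
  | .lamL M => PatternTm M
  | .lamA M => PatternTm M
  | .lamI M => PatternTm M
  | .appL M N => PatternTm M ∧ PatternTm N
  | .appA M N => PatternTm M ∧ PatternTm N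
  | .appI M N => PatternTm M ∧ PatternTm N

/-- Occurrence n ∈ M of a variable in a term (flexible occurrences included). -/
inductive Occurs : ℕ → Tm → Prop
  | var {n f} : Occurs n (.var n f)
  | lvar {n X es sh e} : e ∈ es → e.1 = n → Occurs n (.lvar X es sh)
  | pairl {n M N} : Occurs n M → Occurs n (.pair M N)
  | pairr {n M N} : Occurs n N → Occurs n (.pair M N)
  | fst {n M} : Occurs n M → Occurs n (.fst M)
  | snd {n M} : Occurs n M → Occurs n (.snd M)
  | lamL {n M} : Occurs (n+1) M → Occurs n (.lamL M)
  | lamA {n M} : Occurs (n+1) M → Occurs n (.lamA M)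
  | lamI {n M} : Occurs (n+1) M → Occurs n (.lamI M)
  | appLl {n M N} : Occurs n M → Occurs n (.appL M N)
  | appLr {n M N} : Occurs n N → Occurs n (.appL M N)
  | appAl {n M N} : Occurs n M → Occurs n (.appA M N)
  | appAr {n M N} : Occurs n N → Occurs n (.appA M N)
  | appIl {n M N} : Occurs n M → Occurs n (.appI M N)
  | appIr {n M N} : Occurs n N → Occurs n (.appI M N)

/-- Rigid occurrence n ∈_rig M: occurrence not inside a logic variable. -/
inductive RigidOccurs : ℕ → Tm → Prop
  | var {n f} : RigidOccurs n (.var n f)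
  | pairl {n M N} : RigidOccurs n M → RigidOccurs n (.pair M N)
  | pairr {n M N} : RigidOccurs n N → RigidOccurs n (.pair M N)
  | fst {n M} : RigidOccurs n M → RigidOccurs n (.fst M)
  | snd {n M} : RigidOccurs n M → RigidOccurs n (.snd M)
  | lamL {n M} : RigidOccurs (n+1) M → RigidOccurs n (.lamL M)
  | lamA {n M} : RigidOccurs (n+1) M → RigidOccurs n (.lamA M)
  | lamI {n M} : RigidOccurs (n+1) M → RigidOccurs n (.lamI M)
  | appLl {n M N} : RigidOccurs n M → RigidOccurs n (.appL M N)
  | appLr {n M N} : RigidOccurs n N → RigidOccurs n (.appL M N)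
  | appAl {n M N} : RigidOccurs n M → RigidOccurs n (.appA M N)
  | appAr {n M N} : RigidOccurs n N → RigidOccurs n (.appA M N)
  | appIl {n M N} : RigidOccurs n M → RigidOccurs n (.appI M N)
  | appIr {n M N} : RigidOccurs n N → RigidOccurs n (.appI M N)

/-- Occurrence of a logic variable X in a term. -/
inductive HasLvar : ℕ → Tm → Prop
  | lvar {X es sh} : HasLvar X (.lvar X es sh)
  | pairl {X M N} : HasLvar X M → HasLvar X (.pair M N)
  | pairr {X M N} : HasLvar X N → HasLvar X (.pair M N)
  | fst {X M} : HasLvar X M → HasLvar X (.fst M)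
  | snd {X M} : HasLvar X M → HasLvar X (.snd M)
  | lamL {X M} : HasLvar X M → HasLvar X (.lamL M)
  | lamA {X M} : HasLvar X M → HasLvar X (.lamA M)
  | lamI {X M} : HasLvar X M → HasLvar X (.lamI M)
  | appLl {X M N} : HasLvar X M → HasLvar X (.appL M N)
  | appLr {X M N} : HasLvar X N → HasLvar X (.appL M N)
  | appAl {X M N} : HasLvar X M → HasLvar X (.appA M N)
  | appAr {X M N} : HasLvar X N → HasLvar X (.appA M N)
  | appIl {X M N} : HasLvar X M → HasLvar X (.appI M N)
  | appIr {X M N} : HasLvar X N → HasLvar X (.appI M N)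

/-- Look up a (1-based) variable index in a substitution es.↑^sh,
    returning the new index and variable flag. -/
def lookupE (es : SubE) (sh : ℕ) (n : ℕ) (f : Flag) : ℕ × Flag :=
  match es[n-1]? with
  | some e => (e.1, e.2.1)
  | none => (n - es.length + sh, f)

/-- Extend a substitution under a binder: 1^{ff}.(s ∘ ↑). -/
def extSub (es : SubE) (f : Flag) : SubE := (1, f, f) :: shiftE es

/-- Apply a substitution (of the variable-entry form) to a term. -/
def applySub (es : SubE) (sh : ℕ) : Tm → Tm
  | .var n f => .var (lookupE es sh n f).1 (lookupE es sh n f).2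
  | .lvar X ts _ =>
      .lvar X (ts.map fun e => ((lookupE es sh e.1 e.2.1).1, (lookupE es sh e.1 e.2.1).2, e.2.2)) sh
  | .pair M N => .pair (applySub es sh M) (applySub es sh N)
  | .fst M => .fst (applySub es sh M)
  | .snd M => .snd (applySub es sh M)
  | .lamL M => .lamL (applySub (extSub es .L) (sh+1) M)
  | .lamA M => .lamA (applySub (extSub es .A) (sh+1) M)
  | .lamI M => .lamI (applySub (extSub es .I) (sh+1) M)
  | .appL M N => .appL (applySub es sh M) (applySub es sh N)
  | .appA M N => .appA (applySub es sh M) (applySub es sh N)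
  | .appI M N => .appI (applySub es sh M) (applySub es sh N)

/-- Instantiation [X ← N]M of a logic variable. -/
def inst (X : ℕ) (N : Tm) : Tm → Tm
  | .var n f => .var n f
  | .lvar Y es sh => if Y = X then applySub es sh N else .lvar Y es sh
  | .pair M M' => .pair (inst X N M) (inst X N M')
  | .fst M => .fst (inst X N M)
  | .snd M => .snd (inst X N M)
  | .lamL M => .lamL (inst X N M)
  | .lamA M => .lamA (inst X N M)
  | .lamI M => .lamI (inst X N M)
  | .appL M M' => .appL (inst X N M) (inst X N M')
  | .appA M M' => .appA (inst X N M) (inst X N M')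
  | .appI M M' => .appI (inst X N M) (inst X N M')


/-- A typing Γ ⊢ s : Γ' is strong if there is no Γ'' ≠ Γ' with Γ'' ≻_aff Γ'
    and Γ ⊢ s : Γ''. -/
def StrongTy (Γ : Ctx) (es : SubE) (n : ℕ) (Γ' : Ctx) : Prop :=
  SubTy Γ es n Γ' ∧ ∀ Γ'', AffWeak Γ'' Γ' → SubTy Γ es n Γ'' → Γ'' = Γ'

set_option linter.constructorNameAsVariable false

/-- Pointwise split relation on flags. -/
inductive SplitF : CFlag → CFlag → CFlag → Prop
  | int : SplitF .i .i .i
  | ulin : SplitF .ul .ul .ul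
  | uaff : SplitF .ua .ua .ua
  | linl : SplitF .l .l .ul
  | linr : SplitF .l .ul .l
  | affl : SplitF .a .a .ua
  | affr : SplitF .a .ua .a

theorem split_comm {Γ Γ₁ Γ₂ : Ctx} (h : Split Γ Γ₁ Γ₂) : Split Γ Γ₂ Γ₁ := by
  induction h with
  | nil => exact .nil
  | int _ ih => exact .int ih
  | ulin _ ih => exact .ulin ih
  | uaff _ ih => exact .uaff ih
  | linl _ ih => exact .linr ih
  | linr _ ih => exact .linl ih
  | affl _ ih => exact .affr ih
  | affr _ ih => exact .affl ih

theorem split_getElem? {Γ Γ₁ Γ₂ : Ctx} (h : Split Γ Γ₁ Γ₂) (k : ℕ) :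
    (Γ[k]? = none ∧ Γ₁[k]? = none ∧ Γ₂[k]? = none) ∨
    ∃ A c c₁ c₂, Γ[k]? = some (A, c) ∧ Γ₁[k]? = some (A, c₁) ∧ Γ₂[k]? = some (A, c₂)
      ∧ SplitF c c₁ c₂ := by
  induction h generalizing k with
  | nil => left; simp
  | int h ih =>
    cases k with
    | zero => exact Or.inr ⟨_, _, _, _, List.getElem?_cons_zero, List.getElem?_cons_zero, List.getElem?_cons_zero, .int⟩
    | succ k => simpa using ih k
  | ulin h ih =>
    cases k with
    | zero => exact Or.inr ⟨_, _, _, _, List.getElem?_cons_zero, List.getElem?_cons_zero, List.getElem?_cons_zero, .ulin⟩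
    | succ k => simpa using ih k
  | uaff h ih =>
    cases k with
    | zero => exact Or.inr ⟨_, _, _, _, List.getElem?_cons_zero, List.getElem?_cons_zero, List.getElem?_cons_zero, .uaff⟩
    | succ k => simpa using ih k
  | linl h ih =>
    cases k with
    | zero => exact Or.inr ⟨_, _, _, _, List.getElem?_cons_zero, List.getElem?_cons_zero, List.getElem?_cons_zero, .linl⟩
    | succ k => simpa using ih k
  | linr h ih =>
    cases k with
    | zero => exact Or.inr ⟨_, _, _, _, List.getElem?_cons_zero, List.getElem?_cons_zero, List.getElem?_cons_zero, .linr⟩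
    | succ k => simpa using ih k
  | affl h ih =>
    cases k with
    | zero => exact Or.inr ⟨_, _, _, _, List.getElem?_cons_zero, List.getElem?_cons_zero, List.getElem?_cons_zero, .affl⟩
    | succ k => simpa using ih k
  | affr h ih =>
    cases k with
    | zero => exact Or.inr ⟨_, _, _, _, List.getElem?_cons_zero, List.getElem?_cons_zero, List.getElem?_cons_zero, .affr⟩
    | succ k => simpa using ih k

theorem split_set {Γ Γ₁ Γ₂ : Ctx} (h : Split Γ Γ₁ Γ₂) {c c₁ c₂ : CFlag} {B : Ty}
    (hf : SplitF c c₁ c₂) : ∀ p, p < Γ.length →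
    Split (Γ.set p (B, c)) (Γ₁.set p (B, c₁)) (Γ₂.set p (B, c₂)) := by
  induction h with
  | nil => intro p hp; simp at hp
  | int h ih | ulin h ih | uaff h ih | linl h ih | linr h ih | affl h ih | affr h ih =>
    intro p hp
    cases p with
    | zero =>
      simp only [List.set]
      cases hf with
      | int => exact .int h
      | ulin => exact .ulin h
      | uaff => exact .uaff h
      | linl => exact .linl h
      | linr => exact .linr h
      | affl => exact .affl h
      | affr => exact .affr h
    | succ p =>
      simp only [List.set]
      first
      | exact .int (ih p (by simpa using hp))
      | exact .ulin (ih p (by simpa using hp))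
      | exact .uaff (ih p (by simpa using hp))
      | exact .linl (ih p (by simpa using hp))
      | exact .linr (ih p (by simpa using hp))
      | exact .affl (ih p (by simpa using hp))
      | exact .affr (ih p (by simpa using hp))

/-- Skeleton of a context: types with variable flags. -/
def skel (Γ : Ctx) : List (Ty × Flag) := Γ.map fun e => (e.1, cToF e.2)

theorem skel_split {Γ Γ₁ Γ₂ : Ctx} (h : Split Γ Γ₁ Γ₂) :
    skel Γ₁ = skel Γ ∧ skel Γ₂ = skel Γ := by
  induction h with
  | nil => exact ⟨rfl, rfl⟩
  | int h ih | ulin h ih | uaff h ih | linl h ih | linr h ih | affl h ih | affr h ih =>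
    simp [skel, cToF] at *; exact ih

theorem skel_bar (Γ : Ctx) : skel (bar Γ) = skel Γ := by
  induction Γ with
  | nil => rfl
  | cons e Γ ih =>
    obtain ⟨A, c⟩ := e
    cases c <;> simp [skel, bar, cToF] at * <;> exact ih

def barF : CFlag → CFlag | .l => .ul | .a => .ua | c => c

theorem bar_def (Γ : Ctx) : bar Γ = Γ.map fun e => (e.1, barF e.2) := by
  induction Γ with
  | nil => rfl
  | cons e Γ ih =>
    obtain ⟨A, c⟩ := e
    cases c <;> simp [bar, barF] at * <;> exact ih

theorem list_set_id {α} {l : List α} {p : ℕ} {x : α} (h : l[p]? = some x) :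
    l.set p x = l := by
  induction l generalizing p with
  | nil => rfl
  | cons a l ih =>
    cases p with
    | zero => simp_all
    | succ q => simp at h ⊢; exact ih h

theorem noLin_bar (Γ : Ctx) : NoLin (bar Γ) := by
  intro e he
  rw [bar_def] at he
  rcases List.mem_map.1 he with ⟨⟨A, c⟩, -, rfl⟩
  cases c <;> simp [barF]

theorem noLin_set {Γ : Ctx} (h : NoLin Γ) {B c'} (hc : c' ≠ CFlag.l) (p : ℕ) :
    NoLin (Γ.set p (B, c')) := by
  intro e he
  rcases List.mem_or_eq_of_mem_set he with h' | h'
  · exact h e h'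
  · subst h'; exact hc

theorem varTyR_skel {Γ Γ' : Ctx} {n f A} (h : VarTyR Γ n f A) (hs : skel Γ' = skel Γ) :
    VarTyR Γ' n f A := by
  induction h generalizing Γ' with
  | @here Γ A l f hl =>
    match Γ', hs with
    | (A', l') :: Γ't, hs =>
      simp [skel] at hs
      obtain ⟨⟨h1, h2⟩, _⟩ := hs
      exact h1 ▸ VarTyR.here (by rw [h2, hl])
  | @there Γ B l n f A h ih =>
    match Γ', hs with
    | (A', l') :: Γ't, hs =>
      simp [skel] at hs
      exact VarTyR.there (ih (by simp [skel, hs.2]))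

theorem varTy_varTyR {Γ : Ctx} {n f A} (h : VarTy Γ n f A) : VarTyR Γ n f A := by
  induction h with
  | here _ => exact .here (by cases ‹Flag› <;> rfl)
  | there _ _ ih => exact .there ih

theorem varTy_pos {Γ : Ctx} {n f A} (h : VarTy Γ n f A) : 1 ≤ n := by
  induction h <;> omega

theorem varTyR_pos {Γ : Ctx} {n f A} (h : VarTyR Γ n f A) : 1 ≤ n := by
  induction h <;> omega

theorem varTy_getElem {Γ : Ctx} {n f A} (h : VarTy Γ n f A) :
    Γ[n-1]? = some (A, flagC f) := by
  induction h with
  | here _ => simp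
  | @there Γ B l n f A h hl ih =>
    have := varTy_pos h
    have : (n + 1 - 1 : ℕ) = (n - 1) + 1 := by omega
    rw [this]
    simpa using ih

theorem varTyR_getElem {Γ : Ctx} {n f A} (h : VarTyR Γ n f A) :
    ∃ c, Γ[n-1]? = some (A, c) ∧ cToF c = f := by
  induction h with
  | @here Γ A l f hl => exact ⟨l, by simp, hl⟩
  | @there Γ B l n f A h ih =>
    have := varTyR_pos h
    have h2 : (n + 1 - 1 : ℕ) = (n - 1) + 1 := by omega
    rw [h2]
    simpa using ih

theorem varTy_set {Γ : Ctx} {n f A} (h : VarTy Γ n f A) {p : ℕ} {B' c'}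
    (hp : p + 1 ≠ n) (hc : c' ≠ CFlag.l) : VarTy (Γ.set p (B', c')) n f A := by
  induction h generalizing p with
  | @here Γ A f hnl =>
    have : ∃ q, p = q + 1 := ⟨p - 1, by omega⟩
    obtain ⟨q, rfl⟩ := this
    exact .here (noLin_set hnl hc q)
  | @there Γ B l n f A h hl ih =>
    cases p with
    | zero => exact .there h hc
    | succ q => exact .there (ih (by omega)) hl

theorem varTy_flag_ne {Γ : Ctx} {n f A} (hnl : NoLin Γ) (h : VarTy Γ n f A) :
    f ≠ Flag.L := by
  intro hf
  subst hf
  have := varTy_getElem h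
  have hm : (A, flagC .L) ∈ Γ := List.mem_of_getElem? this
  exact hnl _ hm rfl

theorem bar_set {Γ : Ctx} {p B c c'} (h : Γ[p]? = some (B, c))
    (hc : barF c' = barF c) : bar (Γ.set p (B, c')) = bar Γ := by
  have hb : (bar Γ)[p]? = some (B, barF c) := by
    rw [bar_def]
    simp [h]
  rw [bar_def, List.map_set, ← bar_def]
  simpa [hc] using list_set_id hb

theorem bar_eq_of_split {Γ Γ₁ Γ₂ : Ctx} (h : Split Γ Γ₁ Γ₂) :
    bar Γ₁ = bar Γ ∧ bar Γ₂ = bar Γ := by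
  induction h with
  | nil => exact ⟨rfl, rfl⟩
  | int h ih | ulin h ih | uaff h ih | linl h ih | linr h ih | affl h ih | affr h ih =>
    simp [bar] at *; exact ih

theorem split_bar_left (Γ : Ctx) : Split Γ (bar Γ) Γ := by
  induction Γ with
  | nil => exact .nil
  | cons e Γ ih =>
    obtain ⟨A, c⟩ := e
    cases c
    · exact .int ih
    · exact .affr ih
    · exact .uaff ih
    · exact .linr ih
    · exact .ulin ih

theorem split_one {Γ : Ctx} {p B} (h : Γ[p]? = some (B, .a)) :
    Split Γ ((bar Γ).set p (B, .a)) (Γ.set p (B, .ua)) := by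
  induction Γ generalizing p with
  | nil => simp at h
  | cons e Γ ih =>
    cases p with
    | zero =>
      simp at h
      subst h
      exact .affl (split_bar_left Γ)
    | succ q =>
      simp at h
      obtain ⟨A, c⟩ := e
      have := ih h
      simp only [bar, List.map_cons, List.set]
      cases c
      · exact .int this
      · exact .affr this
      · exact .uaff this
      · exact .linr this
      · exact .ulin this

theorem varTy_of_noLin {Δ : Ctx} (hnl : NoLin Δ) : ∀ {p B}, Δ[p]? = some (B, .a) →
    VarTy Δ (p+1) .A B := by
  induction Δ with
  | nil => intro p B h; simp at h
  | cons e Δ ih =>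
    intro p B h
    cases p with
    | zero =>
      simp at h
      subst h
      exact VarTy.here (Γ := Δ) (A := B) (f := .A)
        (fun e he => hnl e (List.mem_cons_of_mem _ he))
    | succ q =>
      simp at h
      exact .there (ih (fun e he => hnl e (List.mem_cons_of_mem _ he)) h)
        (hnl e List.mem_cons_self)

theorem skel_set {Γ : Ctx} {p B c c'} (h : Γ[p]? = some (B, c)) (hc : cToF c' = cToF c) :
    skel (Γ.set p (B, c')) = skel Γ := by
  simp only [skel, List.map_set]
  rw [hc]
  exact list_set_id (by simp [h])

theorem split_assoc {Γ Γa Γb Γb₁ Γb₂ : Ctx} (h1 : Split Γ Γa Γb)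
    (h2 : Split Γb Γb₁ Γb₂) : ∃ Δ, Split Γ Δ Γb₂ ∧ Split Δ Γa Γb₁ := by
  induction h1 generalizing Γb₁ Γb₂ with
  | nil =>
    cases h2
    exact ⟨[], .nil, .nil⟩
  | @int Γ Γ₁ Γ₂ A h ih =>
    cases h2 with
    | int h2 => obtain ⟨Δ, hΔ1, hΔ2⟩ := ih h2; exact ⟨_, .int hΔ1, .int hΔ2⟩
  | @ulin Γ Γ₁ Γ₂ A h ih =>
    cases h2 with
    | ulin h2 => obtain ⟨Δ, hΔ1, hΔ2⟩ := ih h2; exact ⟨_, .ulin hΔ1, .ulin hΔ2⟩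
  | @uaff Γ Γ₁ Γ₂ A h ih =>
    cases h2 with
    | uaff h2 => obtain ⟨Δ, hΔ1, hΔ2⟩ := ih h2; exact ⟨_, .uaff hΔ1, .uaff hΔ2⟩
  | @linl Γ Γ₁ Γ₂ A h ih =>
    cases h2 with
    | ulin h2 => obtain ⟨Δ, hΔ1, hΔ2⟩ := ih h2; exact ⟨_, .linl hΔ1, .linl hΔ2⟩
  | @linr Γ Γ₁ Γ₂ A h ih =>
    cases h2 with
    | linl h2 => obtain ⟨Δ, hΔ1, hΔ2⟩ := ih h2; exact ⟨_, .linl hΔ1, .linr hΔ2⟩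
    | linr h2 => obtain ⟨Δ, hΔ1, hΔ2⟩ := ih h2; exact ⟨_, .linr hΔ1, .ulin hΔ2⟩
  | @affl Γ Γ₁ Γ₂ A h ih =>
    cases h2 with
    | uaff h2 => obtain ⟨Δ, hΔ1, hΔ2⟩ := ih h2; exact ⟨_, .affl hΔ1, .affl hΔ2⟩
  | @affr Γ Γ₁ Γ₂ A h ih =>
    cases h2 with
    | affl h2 => obtain ⟨Δ, hΔ1, hΔ2⟩ := ih h2; exact ⟨_, .affl hΔ1, .affr hΔ2⟩
    | affr h2 => obtain ⟨Δ, hΔ1, hΔ2⟩ := ih h2; exact ⟨_, .affr hΔ1, .uaff hΔ2⟩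

/-- Lemma G: marking an affine assumption not used by the substitution as used. -/
theorem subTy_mark {Γ : Ctx} {es n Γ'} (h : SubTy Γ es n Γ') :
    ∀ {p B}, Γ[p]? = some (B, .a) → (∀ e ∈ es, e.1 ≠ p + 1) →
    SubTy (Γ.set p (B, .ua)) es n Γ' := by
  induction h with
  | nil => intro p B hp _; simp at hp
  | @shift Γ B l m Γ' h hl ih =>
    intro p B' hp hes
    cases p with
    | zero =>
      simp at hp
      rcases hp with ⟨rfl, rfl⟩
      exact .shift h (by simp)
    | succ q =>
      simp at hp
      exact .shift (ih hp (by simp)) hl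
  | @consI Γ m f' A es n Γ' hv h ih =>
    intro p B hp hes
    refine .consI ?_ (ih hp (fun e he => hes e (List.mem_cons_of_mem _ he)))
    rwa [bar_set (c' := .ua) hp rfl]
  | @consL Γ Γa Γb m f' A es n Γ' hsp hv h ih =>
    intro p B hp hes
    have hm : m ≠ p + 1 := hes _ List.mem_cons_self
    rcases split_getElem? hsp p with ⟨h1, _, _⟩ | ⟨A', c, c₁, c₂, h1, h2, h3, hf⟩
    · simp [hp] at h1
    · rw [hp] at h1
      injection h1 with h1
      injection h1 with hA hc
      subst hA; subst hc
      have hlen : p < Γ.length := (List.getElem?_eq_some_iff.1 hp).1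
      cases hf with
      | affl =>
        have hsp' := split_set hsp (B := B) SplitF.uaff p hlen
        rw [list_set_id (l := Γb) (by rw [h3])] at hsp'
        exact .consL hsp' (varTy_set hv (by omega) (by simp)) h
      | affr =>
        have hsp' := split_set hsp (B := B) SplitF.uaff p hlen
        rw [list_set_id (l := Γa) (by rw [h2])] at hsp'
        refine .consL hsp' hv (ih (by rw [h3]) ?_)
        exact fun e he => hes e (List.mem_cons_of_mem _ he)
  | @consA Γ Γa Γb m f' A es n Γ' hsp hnl hv h ih =>
    intro p B hp hes
    have hm : m ≠ p + 1 := hes _ List.mem_cons_self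
    rcases split_getElem? hsp p with ⟨h1, _, _⟩ | ⟨A', c, c₁, c₂, h1, h2, h3, hf⟩
    · simp [hp] at h1
    · rw [hp] at h1
      injection h1 with h1
      injection h1 with hA hc
      subst hA; subst hc
      have hlen : p < Γ.length := (List.getElem?_eq_some_iff.1 hp).1
      cases hf with
      | affl =>
        have hsp' := split_set hsp (B := B) SplitF.uaff p hlen
        rw [list_set_id (l := Γb) (by rw [h3])] at hsp'
        exact .consA hsp' (noLin_set hnl (by simp) p)
          (varTy_set hv (by omega) (by simp)) h
      | affr =>
        have hsp' := split_set hsp (B := B) SplitF.uaff p hlen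
        rw [list_set_id (l := Γa) (by rw [h2])] at hsp'
        refine .consA hsp' hnl hv (ih (by rw [h3]) ?_)
        exact fun e he => hes e (List.mem_cons_of_mem _ he)
  | @consUL Γ m f' A es n Γ' hv h ih =>
    intro p B hp hes
    exact .consUL (varTyR_skel hv (skel_set hp rfl))
      (ih hp (fun e he => hes e (List.mem_cons_of_mem _ he)))
  | @consUA Γ m f' A es n Γ' hv hf h ih =>
    intro p B hp hes
    exact .consUA (varTyR_skel hv (skel_set hp rfl)) hf
      (ih hp (fun e he => hes e (List.mem_cons_of_mem _ he)))

/-- Lemma H: unmarking a used affine assumption. -/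
theorem subTy_unmark {Γ : Ctx} {es n Γ'} (h : SubTy Γ es n Γ') :
    ∀ {p B}, Γ[p]? = some (B, .ua) → SubTy (Γ.set p (B, .a)) es n Γ' := by
  induction h with
  | nil => intro p B hp; simp at hp
  | @shift Γ B l m Γ' h hl ih =>
    intro p B' hp
    cases p with
    | zero =>
      simp at hp
      rcases hp with ⟨rfl, rfl⟩
      exact .shift h (by simp)
    | succ q =>
      simp at hp
      exact .shift (ih hp) hl
  | @consI Γ m f' A es n Γ' hv h ih =>
    intro p B hp
    refine .consI ?_ (ih hp)
    rwa [bar_set (c' := .a) hp rfl]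
  | @consL Γ Γa Γb m f' A es n Γ' hsp hv h ih =>
    intro p B hp
    rcases split_getElem? hsp p with ⟨h1, _, _⟩ | ⟨A', c, c₁, c₂, h1, h2, h3, hf⟩
    · simp [hp] at h1
    · rw [hp] at h1
      injection h1 with h1
      injection h1 with hA hc
      subst hA; subst hc
      have hlen : p < Γ.length := (List.getElem?_eq_some_iff.1 hp).1
      cases hf with
      | uaff =>
        have hsp' := split_set hsp (B := B) SplitF.affl p hlen
        rw [list_set_id (l := Γb) (by rw [h3])] at hsp'
        have hm : p + 1 ≠ m := by
          intro he
          have hg := varTy_getElem hv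
          rw [← he, Nat.add_sub_cancel, h2] at hg
          injection hg with hg
          injection hg with _ hg
          cases f' <;> simp [flagC] at hg
        exact .consL hsp' (varTy_set hv hm (by simp)) h
  | @consA Γ Γa Γb m f' A es n Γ' hsp hnl hv h ih =>
    intro p B hp
    rcases split_getElem? hsp p with ⟨h1, _, _⟩ | ⟨A', c, c₁, c₂, h1, h2, h3, hf⟩
    · simp [hp] at h1
    · rw [hp] at h1
      injection h1 with h1
      injection h1 with hA hc
      subst hA; subst hc
      have hlen : p < Γ.length := (List.getElem?_eq_some_iff.1 hp).1
      cases hf with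
      | uaff =>
        have hsp' := split_set hsp (B := B) SplitF.affl p hlen
        rw [list_set_id (l := Γb) (by rw [h3])] at hsp'
        have hm : p + 1 ≠ m := by
          intro he
          have hg := varTy_getElem hv
          rw [← he, Nat.add_sub_cancel, h2] at hg
          injection hg with hg
          injection hg with _ hg
          cases f' <;> simp [flagC] at hg
        exact .consA hsp' (noLin_set hnl (by simp) p) (varTy_set hv hm (by simp)) h
  | @consUL Γ m f' A es n Γ' hv h ih =>
    intro p B hp
    exact .consUL (varTyR_skel hv (skel_set hp rfl)) (ih hp)
  | @consUA Γ m f' A es n Γ' hv hf h ih =>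
    intro p B hp
    exact .consUA (varTyR_skel hv (skel_set hp rfl)) hf (ih hp)

theorem skel_getElem (Γ : Ctx) (p : ℕ) :
    (skel Γ)[p]? = (Γ[p]?).map fun e => (e.1, cToF e.2) := by
  simp [skel]

theorem cToF_flagC (f : Flag) : cToF (flagC f) = f := by cases f <;> rfl

/-- The index of each entry points to an assumption with matching variable flag. -/
theorem subTy_entry_skel {Γ : Ctx} {es n Γ'} (h : SubTy Γ es n Γ') :
    ∀ {i j : ℕ} {f' f : Flag}, es[i]? = some (j, f', f) →
    1 ≤ j ∧ ∃ B, (skel Γ)[j-1]? = some (B, f') := by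
  induction h with
  | nil => intro i j f' f hi; simp at hi
  | @shift Γ B l m Γ' h hl ih => intro i j f' f hi; simp at hi
  | @consI Γ m f' A es n Γ' hv h ih =>
    intro i j g' g hi
    cases i with
    | zero =>
      simp at hi
      obtain ⟨rfl, rfl, rfl⟩ := hi
      refine ⟨varTy_pos hv, A, ?_⟩
      have := varTy_getElem hv
      rw [← skel_bar Γ, skel_getElem, this]
      simp [cToF_flagC]
    | succ i' => simp at hi; exact ih hi
  | @consL Γ Γa Γb m f' A es n Γ' hsp hv h ih =>
    intro i j g' g hi
    cases i with
    | zero =>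
      simp at hi
      obtain ⟨rfl, rfl, rfl⟩ := hi
      refine ⟨varTy_pos hv, A, ?_⟩
      rw [← (skel_split hsp).1, skel_getElem, varTy_getElem hv]
      simp [cToF_flagC]
    | succ i' =>
      simp at hi
      rw [← (skel_split hsp).2]
      exact ih hi
  | @consA Γ Γa Γb m f' A es n Γ' hsp hnl hv h ih =>
    intro i j g' g hi
    cases i with
    | zero =>
      simp at hi
      obtain ⟨rfl, rfl, rfl⟩ := hi
      refine ⟨varTy_pos hv, A, ?_⟩
      rw [← (skel_split hsp).1, skel_getElem, varTy_getElem hv]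
      simp [cToF_flagC]
    | succ i' =>
      simp at hi
      rw [← (skel_split hsp).2]
      exact ih hi
  | @consUL Γ m f' A es n Γ' hv h ih =>
    intro i j g' g hi
    cases i with
    | zero =>
      simp at hi
      obtain ⟨rfl, rfl, rfl⟩ := hi
      obtain ⟨c, hc, hcf⟩ := varTyR_getElem hv
      exact ⟨varTyR_pos hv, A, by rw [skel_getElem, hc]; simp [hcf]⟩
    | succ i' => simp at hi; exact ih hi
  | @consUA Γ m f' A es n Γ' hv hf h ih =>
    intro i j g' g hi
    cases i with
    | zero =>
      simp at hi
      obtain ⟨rfl, rfl, rfl⟩ := hi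
      obtain ⟨c, hc, hcf⟩ := varTyR_getElem hv
      exact ⟨varTyR_pos hv, A, by rw [skel_getElem, hc]; simp [hcf]⟩
    | succ i' => simp at hi; exact ih hi

/-- Lemma D: unused-affine codomain assumptions come from affine entries whose
    index is unused in the domain. -/
theorem subTy_a_entry {Γ : Ctx} {es n Γ'} (h : SubTy Γ es n Γ') :
    ∀ {i : ℕ} {B : Ty}, Γ'[i]? = some (B, .a) →
    ∃ j f', es[i]? = some (j, f', .A) ∧
      ∃ c, Γ[j-1]? = some (B, c) ∧ (c = .i ∨ c = .a) := by
  induction h with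
  | nil => intro i B hi; simp at hi
  | @shift Γ B l m Γ' h hl ih =>
    intro i B' hi
    obtain ⟨j, f', hj, _⟩ := ih hi
    simp at hj
  | @consI Γ m f' A es n Γ' hv h ih =>
    intro i B hi
    cases i with
    | zero => simp at hi
    | succ i' =>
      simp at hi
      obtain ⟨j, f', hj, c, hc, hor⟩ := ih hi
      exact ⟨j, f', by simpa using hj, c, hc, hor⟩
  | @consL Γ Γa Γb m f' A es n Γ' hsp hv h ih =>
    intro i B hi
    cases i with
    | zero => simp at hi
    | succ i' =>
      simp at hi
      obtain ⟨j, f'', hj, c, hc, hor⟩ := ih hi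
      refine ⟨j, f'', by simpa using hj, ?_⟩
      rcases split_getElem? hsp (j-1) with ⟨h1, h2, h3⟩ | ⟨A', c0, c1, c2, h1, h2, h3, hf⟩
      · simp [h3] at hc
      · rw [h3] at hc
        injection hc with hc
        injection hc with hA hcc
        subst hA; subst hcc
        rcases hor with rfl | rfl
        · cases hf; exact ⟨_, h1, Or.inl rfl⟩
        · cases hf; exact ⟨_, h1, Or.inr rfl⟩
  | @consA Γ Γa Γb m f' A es n Γ' hsp hnl hv h ih =>
    intro i B hi
    cases i with
    | zero =>
      simp at hi
      obtain ⟨rfl, rfl⟩ := hi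
      refine ⟨m, f', by simp, ?_⟩
      have hg := varTy_getElem hv
      have hfne := varTy_flag_ne hnl hv
      rcases split_getElem? hsp (m-1) with ⟨h1, h2, h3⟩ | ⟨A', c0, c1, c2, h1, h2, h3, hf⟩
      · simp [h2] at hg
      · rw [h2] at hg
        injection hg with hg
        injection hg with hA hcc
        subst hA
        cases f' with
        | I => subst hcc; cases hf; exact ⟨_, h1, Or.inl rfl⟩
        | A => subst hcc; cases hf <;> exact ⟨_, h1, Or.inr rfl⟩
        | L => exact absurd rfl hfne
    | succ i' =>
      simp at hi
      obtain ⟨j, f'', hj, c, hc, hor⟩ := ih hi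
      refine ⟨j, f'', by simpa using hj, ?_⟩
      rcases split_getElem? hsp (j-1) with ⟨h1, h2, h3⟩ | ⟨A', c0, c1, c2, h1, h2, h3, hf⟩
      · simp [h3] at hc
      · rw [h3] at hc
        injection hc with hc
        injection hc with hA hcc
        subst hA; subst hcc
        rcases hor with rfl | rfl
        · cases hf; exact ⟨_, h1, Or.inl rfl⟩
        · cases hf; exact ⟨_, h1, Or.inr rfl⟩
  | @consUL Γ m f' A es n Γ' hv h ih =>
    intro i B hi
    cases i with
    | zero => simp at hi
    | succ i' =>
      simp at hi
      obtain ⟨j, f'', hj, hrest⟩ := ih hi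
      exact ⟨j, f'', by simpa using hj, hrest⟩
  | @consUA Γ m f' A es n Γ' hv hf h ih =>
    intro i B hi
    cases i with
    | zero => simp at hi
    | succ i' =>
      simp at hi
      obtain ⟨j, f'', hj, hrest⟩ := ih hi
      exact ⟨j, f'', by simpa using hj, hrest⟩

/-- Lemma E: used-affine codomain assumptions come from affine entries. -/
theorem subTy_ua_entry {Γ : Ctx} {es n Γ'} (h : SubTy Γ es n Γ') :
    ∀ {i : ℕ} {B : Ty}, Γ'[i]? = some (B, .ua) → ∃ j f', es[i]? = some (j, f', .A) := by
  induction h with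
  | nil => intro i B hi; simp at hi
  | @shift Γ B l m Γ' h hl ih =>
    intro i B' hi
    obtain ⟨j, f', hj⟩ := ih hi
    simp at hj
  | @consI Γ m f' A es n Γ' hv h ih =>
    intro i B hi
    cases i with
    | zero => simp at hi
    | succ i' =>
      obtain ⟨j, f'', hj⟩ := ih (by simpa using hi)
      exact ⟨j, f'', by simpa using hj⟩
  | @consL Γ Γa Γb m f' A es n Γ' hsp hv h ih =>
    intro i B hi
    cases i with
    | zero => simp at hi
    | succ i' =>
      obtain ⟨j, f'', hj⟩ := ih (by simpa using hi)
      exact ⟨j, f'', by simpa using hj⟩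
  | @consA Γ Γa Γb m f' A es n Γ' hsp hnl hv h ih =>
    intro i B hi
    cases i with
    | zero => simp at hi
    | succ i' =>
      obtain ⟨j, f'', hj⟩ := ih (by simpa using hi)
      exact ⟨j, f'', by simpa using hj⟩
  | @consUL Γ m f' A es n Γ' hv h ih =>
    intro i B hi
    cases i with
    | zero => simp at hi
    | succ i' =>
      obtain ⟨j, f'', hj⟩ := ih (by simpa using hi)
      exact ⟨j, f'', by simpa using hj⟩
  | @consUA Γ m f' A es n Γ' hv hf h ih =>
    intro i B hi
    cases i with
    | zero => exact ⟨m, f', by simp⟩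
    | succ i' =>
      obtain ⟨j, f'', hj⟩ := ih (by simpa using hi)
      exact ⟨j, f'', by simpa using hj⟩

/-- Lemma F: retyping a used-affine codomain assumption as unused when the
    corresponding domain assumption is unused affine. -/
theorem subTy_retype {es : SubE} : ∀ {Γ Γ' : Ctx} {n i j : ℕ} {B B'' : Ty},
    SubTy Γ es n Γ' → es[i]? = some (j, .A, .A) → Γ'[i]? = some (B, .ua) →
    Γ[j-1]? = some (B'', .a) → 1 ≤ j →
    (∀ (k : ℕ) (e : ℕ × Flag × Flag), es[k]? = some e → k ≠ i → e.1 ≠ j) →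
    SubTy Γ es n (Γ'.set i (B, .a)) := by
  induction es with
  | nil => intro Γ Γ' n i j B B'' h hes hΓ' hdom hj hdist; simp at hes
  | cons e es' ih =>
    intro Γ Γ' n i j B B'' h hes hΓ' hdom hj hdist
    cases i with
    | zero =>
      simp at hes
      obtain ⟨rfl, rfl, rfl⟩ := hes
      cases h with
      | consA hsp hnl hv htail => simp at hΓ'
      | @consUA Γ m f' A es n Γt hv hf htail =>
        have hAB : A = B := by simpa using hΓ'
        obtain ⟨c, hc, -⟩ := varTyR_getElem hv
        rw [hdom] at hc
        injection hc with hc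
        injection hc with hA h2
        rw [hA] at hdom
        have hlen : j - 1 < Γ.length := (List.getElem?_eq_some_iff.1 hdom).1
        have hsp1 := split_one hdom
        have hnl1 : NoLin ((bar Γ).set (j-1) (A, .a)) :=
          noLin_set (noLin_bar Γ) (by simp) _
        have hga : ((bar Γ).set (j-1) (A, .a))[j-1]? = some (A, .a) := by
          rw [List.getElem?_set_self (by simpa [bar_def] using hlen)]
        have hv1 : VarTy ((bar Γ).set (j-1) (A, .a)) j .A A := by
          have := varTy_of_noLin hnl1 hga
          rwa [show j - 1 + 1 = j by omega] at this
        have htail' : SubTy (Γ.set (j-1) (A, .ua)) es' n Γt := by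
          refine subTy_mark htail hdom ?_
          intro e he
          obtain ⟨k, hlt, hke⟩ := List.mem_iff_getElem.1 he
          have hke' : es'[k]? = some e := by
            rw [List.getElem?_eq_getElem hlt, hke]
          have := hdist (k+1) e (by simpa using hke') (by omega)
          omega
        have := SubTy.consA (m := j) (f' := .A) hsp1 hnl1 hv1 htail'
        simpa [← hAB] using this
    | succ i' =>
      simp at hes
      have hdist' : ∀ (k : ℕ) (e : ℕ × Flag × Flag), es'[k]? = some e → k ≠ i' → e.1 ≠ j := by
        intro k e hk hki
        exact hdist (k+1) e (by simpa using hk) (by omega)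
      cases h with
      | @consI Γ m f' A es n Γt hv htail =>
        have := ih htail hes (by simpa using hΓ') hdom hj hdist'
        simpa using SubTy.consI hv this
      | @consUL Γ m f' A es n Γt hv htail =>
        have := ih htail hes (by simpa using hΓ') hdom hj hdist'
        simpa using SubTy.consUL hv this
      | @consUA Γ m f' A es n Γt hv hf htail =>
        have := ih htail hes (by simpa using hΓ') hdom hj hdist'
        simpa using SubTy.consUA hv hf this
      | @consL Γ Γa Γb m f' A es n Γt hsp hv htail =>
        have hm : m ≠ j := hdist 0 (m, f', .L) (by simp) (by omega)
        have hlen : j - 1 < Γ.length := (List.getElem?_eq_some_iff.1 hdom).1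
        rcases split_getElem? hsp (j-1) with ⟨h1, h2, h3⟩ | ⟨A', c0, c1, c2, h1, h2, h3, hf⟩
        · simp [hdom] at h1
        · rw [hdom] at h1
          injection h1 with h1
          injection h1 with hA hc0
          subst hA; subst hc0
          cases hf with
          | affr =>
            have := ih htail hes (by simpa using hΓ') h3 hj hdist'
            simpa using SubTy.consL hsp hv this
          | affl =>
            have hsp2 := split_set hsp (B := B'') SplitF.affr (j-1) hlen
            rw [list_set_id (l := Γ) hdom] at hsp2
            have hv' : VarTy (Γa.set (j-1) (B'', .ua)) m f' A :=
              varTy_set hv (by omega) (by simp)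
            have htail' : SubTy (Γb.set (j-1) (B'', .a)) es' n Γt :=
              subTy_unmark htail h3
            have hgb : (Γb.set (j-1) (B'', .a))[j-1]? = some (B'', .a) := by
              rw [List.getElem?_set_self]
              have := (List.getElem?_eq_some_iff.1 h3).1
              omega
            have := ih htail' hes (by simpa using hΓ') hgb hj hdist'
            simpa using SubTy.consL hsp2 hv' this
      | @consA Γ Γa Γb m f' A es n Γt hsp hnl hv htail =>
        have hm : m ≠ j := hdist 0 (m, f', .A) (by simp) (by omega)
        have hlen : j - 1 < Γ.length := (List.getElem?_eq_some_iff.1 hdom).1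
        rcases split_getElem? hsp (j-1) with ⟨h1, h2, h3⟩ | ⟨A', c0, c1, c2, h1, h2, h3, hf⟩
        · simp [hdom] at h1
        · rw [hdom] at h1
          injection h1 with h1
          injection h1 with hA hc0
          subst hA; subst hc0
          cases hf with
          | affr =>
            have := ih htail hes (by simpa using hΓ') h3 hj hdist'
            simpa using SubTy.consA hsp hnl hv this
          | affl =>
            have hsp2 := split_set hsp (B := B'') SplitF.affr (j-1) hlen
            rw [list_set_id (l := Γ) hdom] at hsp2
            have hv' : VarTy (Γa.set (j-1) (B'', .ua)) m f' A :=
              varTy_set hv (by omega) (by simp)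
            have hnl' : NoLin (Γa.set (j-1) (B'', .ua)) := noLin_set hnl (by simp) _
            have htail' : SubTy (Γb.set (j-1) (B'', .a)) es' n Γt :=
              subTy_unmark htail h3
            have hgb : (Γb.set (j-1) (B'', .a))[j-1]? = some (B'', .a) := by
              rw [List.getElem?_set_self]
              have := (List.getElem?_eq_some_iff.1 h3).1
              omega
            have := ih htail' hes (by simpa using hΓ') hgb hj hdist'
            simpa using SubTy.consA hsp2 hnl' hv' this

/-- The strength condition: affine entries whose codomain assumption is used
    point to used domain assumptions. -/
def Cond (Γ : Ctx) (es : SubE) (Γ' : Ctx) : Prop :=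
  ∀ (i j : ℕ) (f' : Flag), es[i]? = some (j, f', .A) →
    (∃ B, Γ'[i]? = some (B, .ua)) → ∃ B', Γ[j-1]? = some (B', .ua)

theorem affWeak_pointwise {Γ'' Γ' : Ctx} (h : AffWeak Γ'' Γ') :
    ∀ k : ℕ, Γ''[k]? = Γ'[k]? ∨ ∃ B : Ty, Γ''[k]? = some (B, .a) ∧ Γ'[k]? = some (B, .ua) := by
  obtain ⟨Δ, hsp, hnl⟩ := h
  intro k
  rcases split_getElem? hsp k with ⟨h1, h2, h3⟩ | ⟨A, c, c1, c2, h1, h2, h3, hf⟩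
  · left; rw [h1, h3]
  · have hc1 : c1 ≠ .l := hnl _ (List.mem_of_getElem? h2)
    cases hf with
    | affl => right; exact ⟨A, h1, h3⟩
    | linl => exact absurd rfl hc1
    | int => left; rw [h1, h3]
    | ulin => left; rw [h1, h3]
    | uaff => left; rw [h1, h3]
    | linr => left; rw [h1, h3]
    | affr => left; rw [h1, h3]

theorem strong_of_cond {Γ : Ctx} {es n Γ'} (h : SubTy Γ es n Γ') (hc : Cond Γ es Γ') :
    StrongTy Γ es n Γ' := by
  refine ⟨h, ?_⟩
  intro Γ'' hw hty
  have hpt := affWeak_pointwise hw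
  refine List.ext_getElem? ?_
  intro k
  rcases hpt k with he | ⟨B, h1, h2⟩
  · exact he
  · exfalso
    obtain ⟨j, f', hes, c, hcg, hor⟩ := subTy_a_entry hty h1
    obtain ⟨B', hB'⟩ := hc _ _ _ hes ⟨B, h2⟩
    rw [hB'] at hcg
    injection hcg with hcg
    injection hcg with h3 hcc
    rcases hor with rfl | rfl <;> simp at hcc

theorem split_set_weak {Γ' : Ctx} : ∀ {i : ℕ} {B}, Γ'[i]? = some (B, .ua) →
    Split (Γ'.set i (B, .a)) ((bar Γ').set i (B, .a)) Γ' := by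
  induction Γ' with
  | nil => intro i B h; simp at h
  | cons e Γ' ih =>
    intro i B h
    cases i with
    | zero =>
      simp at h
      subst h
      exact .affl (split_bar_left Γ')
    | succ q =>
      obtain ⟨A, c⟩ := e
      simp at h
      have := ih h
      simp only [List.set, bar, List.map_cons]
      cases c
      · exact .int this
      · exact .affr this
      · exact .uaff this
      · exact .linr this
      · exact .ulin this

theorem pattern_distinct {es : SubE} (hp : es.Pairwise (fun a b => a.1 ≠ b.1))
    {i k : ℕ} {e e' : ℕ × Flag × Flag} (hi : es[i]? = some e) (hk : es[k]? = some e')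
    (hne : k ≠ i) : e'.1 ≠ e.1 := by
  rw [List.getElem?_eq_some_iff] at hi hk
  obtain ⟨hil, hie⟩ := hi
  obtain ⟨hkl, hke⟩ := hk
  rcases Nat.lt_or_ge k i with hlt | hge
  · have := (List.pairwise_iff_getElem.1 hp) k i hkl hil hlt
    rw [hie, hke] at this
    exact this
  · have hlt : i < k := by omega
    have := (List.pairwise_iff_getElem.1 hp) i k hil hkl hlt
    rw [hie, hke] at this
    exact fun hh => this hh.symm

theorem cond_of_strong {Γ : Ctx} {es n Γ'} (hpat : PatternSub es)
    (hst : StrongTy Γ es n Γ') : Cond Γ es Γ' := by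
  obtain ⟨hty, hmax⟩ := hst
  rintro i j f' hes ⟨B, hua⟩
  have hmem : (j, f', Flag.A) ∈ es := List.mem_of_getElem? hes
  obtain ⟨hf', hj⟩ := hpat.2 _ hmem
  simp at hf'
  subst hf'
  obtain ⟨hj1, B'', hsk⟩ := subTy_entry_skel hty hes
  rw [skel_getElem] at hsk
  cases hg : Γ[j-1]? with
  | none => rw [hg] at hsk; simp at hsk
  | some e =>
    obtain ⟨B2, c⟩ := e
    rw [hg] at hsk
    simp at hsk
    obtain ⟨-, hcf⟩ := hsk
    cases c <;> simp [cToF] at hcf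
    case ua => exact ⟨B2, rfl⟩
    case a =>
      exfalso
      have hdist : ∀ (k : ℕ) (e : ℕ × Flag × Flag), es[k]? = some e → k ≠ i → e.1 ≠ j :=
        fun k e hk hki => pattern_distinct hpat.1 hes hk hki
      have hre := subTy_retype hty hes hua hg hj hdist
      have hw : AffWeak (Γ'.set i (B, .a)) Γ' :=
        ⟨(bar Γ').set i (B, .a), split_set_weak hua, noLin_set (noLin_bar Γ') (by simp) _⟩
      have heq := hmax _ hw hre
      have := congrArg (fun l => l[i]?) heq
      rw [List.getElem?_set_self (List.getElem?_eq_some_iff.1 hua).1, hua] at this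
      simp at this

/-- Lemma C: typings of substitutions are preserved by context splitting. -/
theorem subTy_split {Γ : Ctx} {es n Γ'} (h : SubTy Γ es n Γ') :
    ∀ {Γ'₁ Γ'₂ : Ctx}, Split Γ' Γ'₁ Γ'₂ →
    ∃ Γ₁ Γ₂, Split Γ Γ₁ Γ₂ ∧ SubTy Γ₁ es n Γ'₁ ∧ SubTy Γ₂ es n Γ'₂ := by
  induction h with
  | nil =>
    intro Γ'₁ Γ'₂ hs
    cases hs
    exact ⟨[], [], .nil, .nil, .nil⟩
  | @shift Γ B l m Γ' h hl ih =>
    intro Γ'₁ Γ'₂ hs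
    obtain ⟨Γ₁, Γ₂, hsp, h1, h2⟩ := ih hs
    cases l with
    | i => exact ⟨(B,.i)::Γ₁, (B,.i)::Γ₂, .int hsp, .shift h1 (by simp), .shift h2 (by simp)⟩
    | a => exact ⟨(B,.a)::Γ₁, (B,.ua)::Γ₂, .affl hsp, .shift h1 (by simp), .shift h2 (by simp)⟩
    | ua => exact ⟨(B,.ua)::Γ₁, (B,.ua)::Γ₂, .uaff hsp, .shift h1 (by simp), .shift h2 (by simp)⟩
    | l => exact absurd rfl hl
    | ul => exact ⟨(B,.ul)::Γ₁, (B,.ul)::Γ₂, .ulin hsp, .shift h1 (by simp), .shift h2 (by simp)⟩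
  | @consI Γ m f' A es n Γ' hv h ih =>
    intro Γ'₁ Γ'₂ hs
    cases hs with
    | int hs =>
      obtain ⟨Γ₁, Γ₂, hsp, h1, h2⟩ := ih hs
      have hb := bar_eq_of_split hsp
      have hv1 : VarTy (bar Γ₁) m f' A := by rw [hb.1]; exact hv
      have hv2 : VarTy (bar Γ₂) m f' A := by rw [hb.2]; exact hv
      exact ⟨Γ₁, Γ₂, hsp, .consI hv1 h1, .consI hv2 h2⟩
  | @consUL Γ m f' A es n Γ' hv h ih =>
    intro Γ'₁ Γ'₂ hs
    cases hs with
    | ulin hs =>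
      obtain ⟨Γ₁, Γ₂, hsp, h1, h2⟩ := ih hs
      have hk := skel_split hsp
      exact ⟨Γ₁, Γ₂, hsp, .consUL (varTyR_skel hv hk.1) h1, .consUL (varTyR_skel hv hk.2) h2⟩
  | @consUA Γ m f' A es n Γ' hv hf h ih =>
    intro Γ'₁ Γ'₂ hs
    cases hs with
    | uaff hs =>
      obtain ⟨Γ₁, Γ₂, hsp, h1, h2⟩ := ih hs
      have hk := skel_split hsp
      exact ⟨Γ₁, Γ₂, hsp, .consUA (varTyR_skel hv hk.1) hf h1,
        .consUA (varTyR_skel hv hk.2) hf h2⟩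
  | @consL Γ Γa Γb m f' A es n Γ' hsp0 hv h ih =>
    intro Γ'₁ Γ'₂ hs
    cases hs with
    | linl hs =>
      obtain ⟨Γb₁, Γb₂, hspb, h1, h2⟩ := ih hs
      obtain ⟨Δ, hd1, hd2⟩ := split_assoc hsp0 hspb
      have hvR : VarTyR Γb₂ m f' A := by
        refine varTyR_skel (varTy_varTyR hv) ?_
        rw [(skel_split hspb).2, (skel_split hsp0).2, (skel_split hsp0).1]
      exact ⟨Δ, Γb₂, hd1, .consL hd2 hv h1, .consUL hvR h2⟩
    | linr hs =>
      obtain ⟨Γb₁, Γb₂, hspb, h1, h2⟩ := ih hs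
      obtain ⟨Δ, hd1, hd2⟩ := split_assoc hsp0 (split_comm hspb)
      have hvR : VarTyR Γb₁ m f' A := by
        refine varTyR_skel (varTy_varTyR hv) ?_
        rw [(skel_split hspb).1, (skel_split hsp0).2, (skel_split hsp0).1]
      exact ⟨Γb₁, Δ, split_comm hd1, .consUL hvR h1, .consL hd2 hv h2⟩
  | @consA Γ Γa Γb m f' A es n Γ' hsp0 hnl hv h ih =>
    intro Γ'₁ Γ'₂ hs
    have hfL : f' ≠ Flag.L := varTy_flag_ne hnl hv
    cases hs with
    | affl hs =>
      obtain ⟨Γb₁, Γb₂, hspb, h1, h2⟩ := ih hs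
      obtain ⟨Δ, hd1, hd2⟩ := split_assoc hsp0 hspb
      have hvR : VarTyR Γb₂ m f' A := by
        refine varTyR_skel (varTy_varTyR hv) ?_
        rw [(skel_split hspb).2, (skel_split hsp0).2, (skel_split hsp0).1]
      exact ⟨Δ, Γb₂, hd1, .consA hd2 hnl hv h1, .consUA hvR hfL h2⟩
    | affr hs =>
      obtain ⟨Γb₁, Γb₂, hspb, h1, h2⟩ := ih hs
      obtain ⟨Δ, hd1, hd2⟩ := split_assoc hsp0 (split_comm hspb)
      have hvR : VarTyR Γb₁ m f' A := by
        refine varTyR_skel (varTy_varTyR hv) ?_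
        rw [(skel_split hspb).1, (skel_split hsp0).2, (skel_split hsp0).1]
      exact ⟨Γb₁, Δ, split_comm hd1, .consUA hvR hfL h1, .consA hd2 hnl hv h2⟩

theorem cond_pres {Γ Γ₁ Γ₂ Γ' Γ'₁ Γ'₂ : Ctx} {es : SubE} {n : ℕ}
    (hsp : Split Γ Γ₁ Γ₂) (hsp' : Split Γ' Γ'₁ Γ'₂)
    (h2 : SubTy Γ₂ es n Γ'₂) (hpat : PatternSub es) (hc : Cond Γ es Γ') :
    Cond Γ₁ es Γ'₁ := by
  rintro i j f' hes ⟨B, hua⟩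
  obtain ⟨hf', hj⟩ := hpat.2 _ (List.mem_of_getElem? hes)
  simp at hf'
  subst hf'
  rcases split_getElem? hsp' i with ⟨h1, hg1, h3⟩ | ⟨A, c, c1, c2, h1, hg1, h3, hf⟩
  · rw [hua] at hg1; cases hg1
  · rw [hua] at hg1
    injection hg1 with hg1
    injection hg1 with hA hc1
    subst hA
    rw [← hc1] at hf
    cases hf with
    | uaff =>
      obtain ⟨B', hB'⟩ := hc i j .A hes ⟨B, h1⟩
      rcases split_getElem? hsp (j-1) with ⟨k1, k2, k3⟩ | ⟨A2, d, d1, d2, k1, k2, k3, kf⟩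
      · rw [hB'] at k1; cases k1
      · rw [hB'] at k1
        injection k1 with k1
        injection k1 with kA kc
        subst kA
        rw [← kc] at kf
        cases kf
        exact ⟨B', k2⟩
    | affr =>
      obtain ⟨j2, f2, hes2, c', hcg, hor⟩ := subTy_a_entry h2 h3
      rw [hes] at hes2
      injection hes2 with hes2
      injection hes2 with hjj hes2
      subst hjj
      obtain ⟨-, B3, hsk⟩ := subTy_entry_skel h2 hes
      rw [skel_getElem, hcg] at hsk
      simp at hsk
      have hc'a : c' = CFlag.a := by
        rcases hor with rfl | rfl
        · simp [cToF] at hsk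
        · rfl
      subst hc'a
      rcases split_getElem? hsp (j-1) with ⟨k1, k2, k3⟩ | ⟨A2, d, d1, d2, k1, k2, k3, kf⟩
      · rw [hcg] at k3; cases k3
      · rw [hcg] at k3
        injection k3 with k3
        injection k3 with kA kc
        subst kA
        rw [← kc] at kf
        cases kf
        exact ⟨B, k2⟩

/-- Strong typings of pattern substitutions are preserved by
    context splitting. -/
theorem strong_preserved_by_split (Γ : Ctx) (es : SubE) (n : ℕ) (Γ' Γ'₁ Γ'₂ : Ctx)
    (hpat : PatternSub es) (hstrong : StrongTy Γ es n Γ')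
    (hsplit : Split Γ' Γ'₁ Γ'₂) :
    ∃ Γ₁ Γ₂, Split Γ Γ₁ Γ₂ ∧
      StrongTy Γ₁ es n Γ'₁ ∧ StrongTy Γ₂ es n Γ'₂ := by
  have hc := cond_of_strong hpat hstrong
  obtain ⟨Γ₁, Γ₂, hsp, h1, h2⟩ := subTy_split hstrong.1 hsplit
  exact ⟨Γ₁, Γ₂, hsp, strong_of_cond h1 (cond_pres hsp hsplit h2 hpat hc),
    strong_of_cond h2 (cond_pres (split_comm hsp) (split_comm hsplit) h1 hpat hc)⟩

end LinUnif
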